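/- Let n and k be positive integers with 2k ≤ n + 1, and let S_k be any subset of T_k with |S_k| = s_k. For a tree t ∈ T_n let N_k(t) = #{v ∈ t : t(v) ∈ S_k}. Then the total number of unordered pairs of distinct fringe subtree occurrences from S_k within the same tree satisfies Σ_{t ∈ T_n} binom(N_k(t), 2) = ((n−2k+1)/2)·binom(2n−4k+2, n−2k+1)·s_k². -/

import Mathlib

open Filter Finset
open scoped Classical

/-- Ordered binary trees: every node has exactly two or no children. -/
inductive BT : Type
  | leaf : BT
  | node : BT → BT → BT
deriving DecidableEq

namespace BT

/-- The size of a binary tree: its number of leaves. -/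
def size : BT → ℕ
  | leaf => 1
  | node l r => size l + size r

/-- The multiset of all fringe subtrees of a tree (one for every node). -/
def fringe : BT → Multiset BT
  | leaf => {leaf}
  | node l r => node l r ::ₘ (fringe l + fringe r)

/-- The finset of all ordered binary trees with `n` leaves. -/
def treesOfSize : ℕ → Finset BT
  | 0 => ∅
  | 1 => {leaf}
  | n + 2 =>
    (Finset.range (n + 1)).attach.biUnion fun k =>
      ((treesOfSize (k.1 + 1)) ×ˢ (treesOfSize (n + 1 - k.1))).image fun p => node p.1 p.2
  decreasing_by
    · have := Finset.mem_range.mp k.2; omega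
    · omega

/-- Boolean test whether two ordered binary trees are isomorphic as unordered trees. -/
def isoB : BT → BT → Bool
  | leaf, leaf => true
  | leaf, node _ _ => false
  | node _ _, leaf => false
  | node l1 r1, node l2 r2 => (isoB l1 l2 && isoB r1 r2) || (isoB l1 r2 && isoB r1 l2)

/-- An injective encoding of ordered binary trees into the natural numbers. -/
def encode : BT → ℕ
  | leaf => 0
  | node l r => Nat.pair (encode l) (encode r) + 1

/-- The canonical representative of the isomorphism class of a binary tree:
two trees are isomorphic (equal as unordered trees) iff their canonical forms agree. -/
def canon : BT → BT
  | leaf => leaf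
  | node l r =>
    let l' := canon l
    let r' := canon r
    if encode l' ≤ encode r' then node l' r' else node r' l'

/-- Number of isomorphism classes of unordered binary trees represented among
the fringe subtrees of `t`. -/
def isoClasses (t : BT) : ℕ := ((fringe t).toFinset.image canon).card

/-- Number of distinct ordered binary trees occurring among the fringe subtrees of `t`. -/
def numDistinct (t : BT) : ℕ := (fringe t).toFinset.card

/-- The probability of a tree under the binary search tree model. -/
noncomputable def pbst (t : BT) : ℝ :=
  ((fringe t).map fun s => if 1 < size s then (1 : ℝ) / ((size s : ℝ) - 1) else 1).prod

/-- Expectation of `f` under the uniform distribution on trees with `n` leaves. -/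
noncomputable def unifE (n : ℕ) (f : BT → ℝ) : ℝ :=
  (∑ t ∈ treesOfSize n, f t) / (treesOfSize n).card

/-- Probability of an event under the uniform distribution on trees with `n` leaves. -/
noncomputable def unifP (n : ℕ) (p : BT → Prop) : ℝ :=
  ((treesOfSize n).filter p).card / (treesOfSize n).card

/-- Expectation of `f` under the binary search tree distribution on trees with `n` leaves. -/
noncomputable def bstE (n : ℕ) (f : BT → ℝ) : ℝ :=
  ∑ t ∈ treesOfSize n, pbst t * f t

/-- Probability of an event under the binary search tree distribution on trees with `n` leaves. -/
noncomputable def bstP (n : ℕ) (p : BT → Prop) : ℝ :=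
  ∑ t ∈ (treesOfSize n).filter p, pbst t

end BT

section Aux
open BT

lemma bt_size_pos : ∀ t : BT, 0 < t.size
  | BT.leaf => by simp [BT.size]
  | BT.node l r => by
    have := bt_size_pos l; have := bt_size_pos r
    simp [BT.size]; omega

lemma bt_size_eq_one {t : BT} (h : t.size = 1) : t = BT.leaf := by
  cases t with
  | leaf => rfl
  | node l r =>
    have := bt_size_pos l; have := bt_size_pos r
    simp [BT.size] at h; omega

lemma size_le_of_mem_fringe : ∀ t : BT, ∀ s ∈ fringe t, BT.size s ≤ BT.size t
  | BT.leaf, s, hs => by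
    simp [fringe] at hs; subst hs; exact le_refl _
  | BT.node l r, s, hs => by
    simp only [fringe, Multiset.mem_cons, Multiset.mem_add] at hs
    rcases hs with rfl | hs | hs
    · exact le_refl _
    · have := size_le_of_mem_fringe l s hs
      simp [BT.size]; omega
    · have := size_le_of_mem_fringe r s hs
      simp [BT.size]; omega

lemma count_fringe_eq_zero {s t : BT} (h : t.size < s.size) :
    (fringe t).count s = 0 := by
  by_contra hc
  have : s ∈ fringe t := by
    rcases Nat.eq_zero_or_pos ((fringe t).count s) with h0 | h0
    · exact absurd h0 hc
    · exact Multiset.count_pos.mp h0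
  exact absurd (size_le_of_mem_fringe t s this) (by omega)

lemma size_of_mem_treesOfSize : ∀ n : ℕ, ∀ t ∈ treesOfSize n, t.size = n := by
  intro n
  induction n using Nat.strong_induction_on with
  | _ n ih =>
    match n with
    | 0 => intro t ht; simp [treesOfSize] at ht
    | 1 => intro t ht; simp [treesOfSize] at ht; subst ht; rfl
    | (n+2) =>
      intro t ht
      rw [treesOfSize] at ht
      simp only [Finset.mem_biUnion, Finset.mem_image, Finset.mem_attach, true_and,
        Finset.mem_product, Subtype.exists] at ht
      obtain ⟨i, hi, ⟨l, r⟩, ⟨hl, hr⟩, rfl⟩ := ht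
      have hi' := Finset.mem_range.mp hi
      have h1 := ih (i + 1) (by omega) l hl
      have h2 := ih (n + 1 - i) (by omega) r hr
      simp [BT.size, h1, h2]; omega

lemma self_mem_treesOfSize : ∀ t : BT, t ∈ treesOfSize t.size
  | BT.leaf => by simp [treesOfSize, BT.size]
  | BT.node l r => by
    have hl := self_mem_treesOfSize l
    have hr := self_mem_treesOfSize r
    have pl := bt_size_pos l
    have pr := bt_size_pos r
    have hsz : (BT.node l r).size = (l.size + r.size - 2) + 2 := by
      simp [BT.size]; omega
    rw [hsz, treesOfSize]
    apply Finset.mem_biUnion.mpr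
    refine ⟨⟨l.size - 1, Finset.mem_range.mpr (by omega)⟩, Finset.mem_attach _ _, ?_⟩
    apply Finset.mem_image.mpr
    refine ⟨(l, r), Finset.mem_product.mpr ⟨?_, ?_⟩, rfl⟩
    · have h1 : l.size - 1 + 1 = l.size := by omega
      rw [h1]; exact hl
    · have h2 : l.size + r.size - 2 + 1 - (l.size - 1) = r.size := by omega
      rw [h2]; exact hr

lemma mem_treesOfSize_iff {n : ℕ} {t : BT} : t ∈ treesOfSize n ↔ t.size = n := by
  constructor
  · exact size_of_mem_treesOfSize n t
  · rintro rfl; exact self_mem_treesOfSize t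

lemma sum_trees {M : Type*} [AddCommMonoid M] (f : BT → M) (n : ℕ) :
    ∑ t ∈ treesOfSize (n + 2), f t
      = ∑ i ∈ Finset.range (n + 1), ∑ l ∈ treesOfSize (i + 1),
          ∑ r ∈ treesOfSize (n + 1 - i), f (BT.node l r) := by
  rw [treesOfSize, Finset.sum_biUnion]
  · rw [← Finset.sum_attach (Finset.range (n + 1)) (fun i => ∑ l ∈ treesOfSize (i + 1),
      ∑ r ∈ treesOfSize (n + 1 - i), f (BT.node l r))]
    apply Finset.sum_congr rfl
    intro i _
    rw [Finset.sum_image, Finset.sum_product]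
    rintro ⟨a, b⟩ _ ⟨c, d⟩ _ h
    simp only [BT.node.injEq] at h
    simp [Prod.ext_iff, h.1, h.2]
  · intro x _ y _ hxy
    simp only [Function.onFun]
    rw [Finset.disjoint_left]
    rintro t htx hty
    simp only [Finset.mem_image, Finset.mem_product, Prod.exists] at htx hty
    obtain ⟨a, b, ⟨ha, hb⟩, rfl⟩ := htx
    obtain ⟨c, d, ⟨hc, hd⟩, heq⟩ := hty
    simp only [BT.node.injEq] at heq
    have h1 := size_of_mem_treesOfSize _ a ha
    have h2 := size_of_mem_treesOfSize _ c hc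
    apply hxy
    apply Subtype.ext
    obtain ⟨rfl, rfl⟩ := heq
    omega
    
end Aux
section Aux2
open BT

lemma card_trees_rec (n : ℕ) : (treesOfSize (n + 2)).card
    = ∑ i ∈ Finset.range (n + 1), (treesOfSize (i + 1)).card * (treesOfSize (n + 1 - i)).card := by
  have h := sum_trees (fun _ => (1 : ℕ)) n
  simpa [Finset.sum_const, mul_comm] using h

lemma card_trees_catalan : ∀ n : ℕ, (treesOfSize (n + 1)).card = catalan n := by
  intro n
  induction n using Nat.strong_induction_on with
  | _ n ih =>
    match n with
    | 0 => simp [treesOfSize]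
    | (n+1) =>
      rw [show n + 1 + 1 = n + 2 from rfl, card_trees_rec, catalan_succ, ← Finset.sum_range fun i => catalan i * catalan (n - i)]
      apply Finset.sum_congr rfl
      intro i hi
      have hi' := Finset.mem_range.mp hi
      have e1 : n + 1 - i = (n - i) + 1 := by omega
      rw [ih i (by omega), e1, ih (n - i) (by omega)]

lemma sum_range_add' {M : Type*} [AddCommMonoid M] (f : ℕ → M) (a b : ℕ) :
    ∑ i ∈ Finset.range (a + b), f i
      = (∑ i ∈ Finset.range a, f i) + ∑ i ∈ Finset.range b, f (a + i) := by
  induction b with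
  | zero => simp
  | succ b ihb =>
    rw [show a + (b + 1) = (a + b) + 1 from rfl, Finset.sum_range_succ, ihb,
      Finset.sum_range_succ, add_assoc]

/-- Number of occurrences of `t1` as a fringe subtree, summed over all trees of size `n`. -/
def occSum (t1 : BT) (n : ℕ) : ℕ := ∑ t ∈ treesOfSize n, (fringe t).count t1

def treesL (m : ℕ) : ℕ := m * (treesOfSize m).card

/-- Auxiliary: occurrences in proper subtrees. -/
def occSub (t1 : BT) : BT → ℕ
  | BT.leaf => 0
  | BT.node l r => (fringe l).count t1 + (fringe r).count t1

lemma count_fringe_eq (t1 t : BT) :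
    (fringe t).count t1 = (if t1 = t then 1 else 0) + occSub t1 t := by
  cases t with
  | leaf => simp [fringe, occSub, Multiset.count_singleton]
  | node l r => simp [fringe, occSub, Multiset.count_cons]; ring

lemma occSum_rec (t1 : BT) (n : ℕ) :
    occSum t1 (n + 2) = (if t1.size = n + 2 then 1 else 0)
      + ∑ i ∈ Finset.range (n + 1),
          (occSum t1 (i + 1) * (treesOfSize (n + 1 - i)).card
            + (treesOfSize (i + 1)).card * occSum t1 (n + 1 - i)) := by
  unfold occSum
  have h1 : ∀ t ∈ treesOfSize (n+2), (fringe t).count t1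
      = (if t1 = t then 1 else 0) + occSub t1 t := fun t _ => count_fringe_eq t1 t
  rw [Finset.sum_congr rfl h1, Finset.sum_add_distrib]
  congr 1
  · rw [Finset.sum_ite_eq (treesOfSize (n+2)) t1 (fun _ => 1)]
    by_cases h : t1.size = n + 2
    · rw [if_pos (mem_treesOfSize_iff.mpr h), if_pos h]
    · rw [if_neg (fun hm => h (mem_treesOfSize_iff.mp hm)), if_neg h]
  · rw [sum_trees (occSub t1) n]
    apply Finset.sum_congr rfl
    intro i _
    simp only [occSub]
    rw [Finset.sum_comm (s := treesOfSize (i+1))]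
    · simp only [Finset.sum_add_distrib, Finset.sum_const, smul_eq_mul]
      congr 1
      · rw [mul_comm]
      · rw [← Finset.mul_sum]

lemma occSum_one (t1 : BT) : occSum t1 1 = if t1.size = 1 then 1 else 0 := by
  unfold occSum
  rw [show treesOfSize 1 = {BT.leaf} from by simp [treesOfSize]]
  rw [Finset.sum_singleton]
  by_cases h : t1.size = 1
  · have := bt_size_eq_one h
    subst this
    simp [fringe, h]
  · have : t1 ≠ BT.leaf := fun hh => h (by subst hh; rfl)
    simp [fringe, Multiset.count_singleton, this, h]

lemma treesL_two_conv (p : ℕ) :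
    2 * ∑ j ∈ Finset.range (p + 1), treesL (j + 1) * (treesOfSize (p + 1 - j)).card
      = (p + 2) * (treesOfSize (p + 2)).card := by
  have refl1 : ∑ j ∈ Finset.range (p + 1), treesL (j + 1) * (treesOfSize (p + 1 - j)).card
      = ∑ j ∈ Finset.range (p + 1), treesL (p + 1 - j) * (treesOfSize (j + 1)).card := by
    have := Finset.sum_range_reflect
      (fun j => treesL (j + 1) * (treesOfSize (p + 1 - j)).card) (p + 1)
    rw [← this]
    apply Finset.sum_congr rfl
    intro j hj
    have hj' := Finset.mem_range.mp hj
    have e1 : p + 1 - 1 - j + 1 = p + 1 - j := by omega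
    have e2 : p + 1 - (p + 1 - 1 - j) = j + 1 := by omega
    rw [e1, e2]
  have key : ∀ j ∈ Finset.range (p + 1),
      treesL (j + 1) * (treesOfSize (p + 1 - j)).card
        + treesL (p + 1 - j) * (treesOfSize (j + 1)).card
      = (p + 2) * ((treesOfSize (j + 1)).card * (treesOfSize (p + 1 - j)).card) := by
    intro j hj
    have hj' := Finset.mem_range.mp hj
    unfold treesL
    rw [show p + 2 = (j + 1) + (p + 1 - j) by omega]
    ring
  calc 2 * ∑ j ∈ Finset.range (p + 1), treesL (j + 1) * (treesOfSize (p + 1 - j)).card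
      = ∑ j ∈ Finset.range (p + 1), (treesL (j + 1) * (treesOfSize (p + 1 - j)).card
          + treesL (p + 1 - j) * (treesOfSize (j + 1)).card) := by
        rw [Finset.sum_add_distrib, ← refl1]; ring
    _ = ∑ j ∈ Finset.range (p + 1), (p + 2) * ((treesOfSize (j + 1)).card * (treesOfSize (p + 1 - j)).card) :=
        Finset.sum_congr rfl key
    _ = (p + 2) * (treesOfSize (p + 2)).card := by
        rw [← Finset.mul_sum, ← card_trees_rec]

lemma occSum_eq (t1 : BT) (k : ℕ) (hk : t1.size = k) :
    ∀ n : ℕ, occSum t1 n = treesL (n + 1 - k) := by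
  have hk1 : 1 ≤ k := by have := bt_size_pos t1; omega
  intro n
  induction n using Nat.strong_induction_on with
  | _ n ih =>
    match n with
    | 0 => simp [occSum, treesOfSize, treesL, show 0 + 1 - k = 0 by omega]
    | 1 =>
      rw [occSum_one, hk]
      by_cases h : k = 1
      · subst h; simp [treesL, treesOfSize]
      · rw [if_neg h, show 1 + 1 - k = 0 by omega]
        simp [treesL]
    | (n+2) =>
      rw [occSum_rec]
      have hsum : ∑ i ∈ Finset.range (n + 1),
          (occSum t1 (i + 1) * (treesOfSize (n + 1 - i)).card
            + (treesOfSize (i + 1)).card * occSum t1 (n + 1 - i))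
          = ∑ i ∈ Finset.range (n + 1),
          (treesL (i + 2 - k) * (treesOfSize (n + 1 - i)).card
            + (treesOfSize (i + 1)).card * treesL (n + 2 - i - k)) := by
        apply Finset.sum_congr rfl
        intro i hi
        have hi' := Finset.mem_range.mp hi
        rw [ih (i + 1) (by omega), ih (n + 1 - i) (by omega),
          show i + 1 + 1 - k = i + 2 - k by omega,
          show n + 1 - i + 1 - k = n + 2 - i - k by omega]
      rw [hsum]
      rcases Nat.lt_or_ge (n + 1) k with hbig | hsmall
      · -- k ≥ n + 2 : almost everything vanishes
        have hz : ∀ i ∈ Finset.range (n + 1),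
            treesL (i + 2 - k) * (treesOfSize (n + 1 - i)).card
              + (treesOfSize (i + 1)).card * treesL (n + 2 - i - k) = 0 := by
          intro i hi
          have hi' := Finset.mem_range.mp hi
          simp [show i + 2 - k = 0 by omega, show n + 2 - i - k = 0 by omega, treesL]
        rw [Finset.sum_eq_zero hz, add_zero]
        by_cases hke : k = n + 2
        · rw [hk, if_pos hke, show n + 2 + 1 - k = 1 by omega]
          simp [treesL, treesOfSize]
        · rw [hk, if_neg (by omega), show n + 2 + 1 - k = 0 by omega]
          simp [treesL]
      · -- k ≤ n + 1 : main case
        set p := n + 1 - k with hpdef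
        rw [hk, if_neg (by omega), zero_add, Finset.sum_add_distrib]
        have hSb : ∑ i ∈ Finset.range (n + 1), (treesOfSize (i + 1)).card * treesL (n + 2 - i - k)
            = ∑ i ∈ Finset.range (n + 1), treesL (i + 2 - k) * (treesOfSize (n + 1 - i)).card := by
          rw [← Finset.sum_range_reflect
            (fun j => treesL (j + 2 - k) * (treesOfSize (n + 1 - j)).card) (n + 1)]
          apply Finset.sum_congr rfl
          intro j hj
          have hj' := Finset.mem_range.mp hj
          rw [show n + 1 - 1 - j + 2 - k = n + 2 - j - k by omega,
              show n + 1 - (n + 1 - 1 - j) = j + 1 by omega, mul_comm]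
        rw [hSb]
        have hSa : ∑ i ∈ Finset.range (n + 1), treesL (i + 2 - k) * (treesOfSize (n + 1 - i)).card
            = ∑ j ∈ Finset.range (p + 1), treesL (j + 1) * (treesOfSize (p + 1 - j)).card := by
          rw [show n + 1 = (k - 1) + (p + 1) by omega, sum_range_add']
          have h0 : ∑ i ∈ Finset.range (k - 1),
              treesL (i + 2 - k) * (treesOfSize ((k - 1) + (p + 1) - i)).card = 0 := by
            apply Finset.sum_eq_zero
            intro i hi
            have hi' := Finset.mem_range.mp hi
            simp [show i + 2 - k = 0 by omega, treesL]
          rw [h0, zero_add]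
          apply Finset.sum_congr rfl
          intro j hj
          have hj' := Finset.mem_range.mp hj
          rw [show k - 1 + j + 2 - k = j + 1 by omega,
              show k - 1 + (p + 1) - (k - 1 + j) = p + 1 - j by omega]
        rw [hSa, ← two_mul, treesL_two_conv, show n + 2 + 1 - k = p + 2 by omega]
        rfl
section Aux3
open BT

/-- `dPair t1 t2 t` = number of ordered pairs of *distinct* nodes of `t` whose fringe
subtrees are `t1` resp. `t2` (as an integer). -/
def dPair (t1 t2 t : BT) : ℤ :=
  ((fringe t).count t1 : ℤ) * ((fringe t).count t2 : ℤ)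
    - (if t1 = t2 then ((fringe t).count t1 : ℤ) else 0)

def pairSum (t1 t2 : BT) (n : ℕ) : ℤ := ∑ t ∈ treesOfSize n, dPair t1 t2 t

def QQ (m : ℕ) : ℕ := m * (m - 1) * (treesOfSize m).card

lemma QQ_two_conv (p : ℕ) :
    2 * (∑ j ∈ Finset.range (p + 1), (treesOfSize (p + 1 - j)).card * QQ (j + 1))
      + 2 * (∑ j ∈ Finset.range (p + 1), treesL (j + 1) * treesL (p + 1 - j))
    = QQ (p + 2) := by
  have key : ∀ j ∈ Finset.range (p + 1),
      (treesOfSize (p + 1 - j)).card * QQ (j + 1) + treesL (j + 1) * treesL (p + 1 - j)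
        = (p + 1) * (treesL (j + 1) * (treesOfSize (p + 1 - j)).card) := by
    intro j hj
    have hj' := Finset.mem_range.mp hj
    unfold QQ treesL
    rw [Nat.add_sub_cancel]
    obtain ⟨q, hq⟩ : ∃ q, p + 1 - j = q := ⟨_, rfl⟩
    rw [hq]
    have ha : j + q = p + 1 := by omega
    rw [← ha]
    ring
  have step := treesL_two_conv p
  calc 2 * (∑ j ∈ Finset.range (p + 1), (treesOfSize (p + 1 - j)).card * QQ (j + 1))
      + 2 * (∑ j ∈ Finset.range (p + 1), treesL (j + 1) * treesL (p + 1 - j))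
      = 2 * ∑ j ∈ Finset.range (p + 1),
          ((treesOfSize (p + 1 - j)).card * QQ (j + 1) + treesL (j + 1) * treesL (p + 1 - j)) := by
        rw [Finset.sum_add_distrib]; ring
    _ = 2 * ∑ j ∈ Finset.range (p + 1),
          (p + 1) * (treesL (j + 1) * (treesOfSize (p + 1 - j)).card) := by
        rw [Finset.sum_congr rfl key]
    _ = (p + 1) * (2 * ∑ j ∈ Finset.range (p + 1),
          treesL (j + 1) * (treesOfSize (p + 1 - j)).card) := by
        rw [← Finset.mul_sum]; ring
    _ = (p + 1) * ((p + 2) * (treesOfSize (p + 2)).card) := by rw [step]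
    _ = QQ (p + 2) := by
        unfold QQ
        rw [show p + 2 - 1 = p + 1 by omega]
        ring

lemma dPair_node (t1 t2 l r : BT) (hs : t1.size = t2.size) :
    dPair t1 t2 (BT.node l r) = dPair t1 t2 l + dPair t1 t2 r
      + ((fringe l).count t1 : ℤ) * ((fringe r).count t2 : ℤ)
      + ((fringe r).count t1 : ℤ) * ((fringe l).count t2 : ℤ) := by
  have cnode : ∀ s : BT, (fringe (BT.node l r)).count s
      = (if s = BT.node l r then 1 else 0) + ((fringe l).count s + (fringe r).count s) :=
    fun s => by rw [count_fringe_eq s (BT.node l r)]; simp [occSub]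
  have szl : l.size < (BT.node l r).size := by
    have := bt_size_pos r; simp [BT.size]; omega
  have szr : r.size < (BT.node l r).size := by
    have := bt_size_pos l; simp [BT.size]; omega
  by_cases h1 : t1 = BT.node l r
  · subst h1
    have zl1 : (fringe l).count (BT.node l r) = 0 := count_fringe_eq_zero szl
    have zr1 : (fringe r).count (BT.node l r) = 0 := count_fringe_eq_zero szr
    have zl2 : (fringe l).count t2 = 0 := count_fringe_eq_zero (hs ▸ szl)
    have zr2 : (fringe r).count t2 = 0 := count_fringe_eq_zero (hs ▸ szr)
    unfold dPair
    rw [cnode (BT.node l r), cnode t2, zl1, zr1, zl2, zr2]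
    by_cases h2 : t2 = BT.node l r <;> simp [h2, eq_comm]
  · by_cases h2 : t2 = BT.node l r
    · subst h2
      have hs' : t1.size = (BT.node l r).size := hs
      have zl1 : (fringe l).count t1 = 0 := count_fringe_eq_zero (hs' ▸ szl)
      have zr1 : (fringe r).count t1 = 0 := count_fringe_eq_zero (hs' ▸ szr)
      have zl2 : (fringe l).count (BT.node l r) = 0 := count_fringe_eq_zero szl
      have zr2 : (fringe r).count (BT.node l r) = 0 := count_fringe_eq_zero szr
      unfold dPair
      rw [cnode t1, cnode (BT.node l r), zl1, zr1, zl2, zr2]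
      simp [h1]
    · unfold dPair
      rw [cnode t1, cnode t2, if_neg h1, if_neg h2]
      by_cases hd : t1 = t2 <;> simp [hd] <;> push_cast <;> ring

lemma pairSum_rec (t1 t2 : BT) (hs : t1.size = t2.size) (n : ℕ) :
    pairSum t1 t2 (n + 2)
      = ∑ i ∈ Finset.range (n + 1),
          (((treesOfSize (n + 1 - i)).card : ℤ) * pairSum t1 t2 (i + 1)
            + ((treesOfSize (i + 1)).card : ℤ) * pairSum t1 t2 (n + 1 - i)
            + (occSum t1 (i + 1) : ℤ) * (occSum t2 (n + 1 - i) : ℤ)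
            + (occSum t2 (i + 1) : ℤ) * (occSum t1 (n + 1 - i) : ℤ)) := by
  unfold pairSum
  rw [sum_trees (dPair t1 t2) n]
  apply Finset.sum_congr rfl
  intro i _
  rw [Finset.sum_congr rfl (fun l _ => Finset.sum_congr rfl (fun r _ => dPair_node t1 t2 l r hs))]
  simp only [Finset.sum_add_distrib]
  have e1 : ∑ l ∈ treesOfSize (i + 1), ∑ _r ∈ treesOfSize (n + 1 - i), dPair t1 t2 l
      = ((treesOfSize (n + 1 - i)).card : ℤ) * pairSum t1 t2 (i + 1) := by
    have : ∀ l ∈ treesOfSize (i + 1),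
        (∑ _r ∈ treesOfSize (n + 1 - i), dPair t1 t2 l)
          = ((treesOfSize (n + 1 - i)).card : ℤ) * dPair t1 t2 l := by
      intro l _
      rw [Finset.sum_const, nsmul_eq_mul]
    rw [Finset.sum_congr rfl this, ← Finset.mul_sum]
    rfl
  have e2 : ∑ _l ∈ treesOfSize (i + 1), ∑ r ∈ treesOfSize (n + 1 - i), dPair t1 t2 r
      = ((treesOfSize (i + 1)).card : ℤ) * pairSum t1 t2 (n + 1 - i) := by
    rw [Finset.sum_const, nsmul_eq_mul]
    rfl
  have e3 : ∑ l ∈ treesOfSize (i + 1), ∑ r ∈ treesOfSize (n + 1 - i),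
        ((fringe l).count t1 : ℤ) * ((fringe r).count t2 : ℤ)
      = (occSum t1 (i + 1) : ℤ) * (occSum t2 (n + 1 - i) : ℤ) := by
    rw [← Finset.sum_mul_sum]
    unfold occSum
    push_cast
    rfl
  have e4 : ∑ l ∈ treesOfSize (i + 1), ∑ r ∈ treesOfSize (n + 1 - i),
        ((fringe r).count t1 : ℤ) * ((fringe l).count t2 : ℤ)
      = (occSum t2 (i + 1) : ℤ) * (occSum t1 (n + 1 - i) : ℤ) := by
    rw [Finset.sum_congr rfl (fun l _ => Finset.sum_congr rfl (fun r _ => mul_comm _ _)),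
      ← Finset.sum_mul_sum]
    unfold occSum
    push_cast
    rfl
  rw [e1, e2, e3, e4]
  rfl
end Aux3
section Aux4
open BT

lemma pairSum_eq (t1 t2 : BT) (k : ℕ) (h1k : t1.size = k) (h2k : t2.size = k) :
    ∀ n : ℕ, pairSum t1 t2 n = (QQ (n + 2 - 2 * k) : ℤ) := by
  have hs : t1.size = t2.size := by rw [h1k, h2k]
  have hk1 : 1 ≤ k := by have := bt_size_pos t1; omega
  intro n
  induction n using Nat.strong_induction_on with
  | _ n ih =>
    match n with
    | 0 =>
      simp [pairSum, treesOfSize, show 0 + 2 - 2 * k = 0 ∨ 0 + 2 - 2 * k = 0 by omega,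
        show 0 + 2 - 2 * k = 0 by omega, QQ]
    | 1 =>
      have hT1 : treesOfSize 1 = {BT.leaf} := by simp [treesOfSize]
      have hQ : QQ (1 + 2 - 2 * k) = 0 := by
        rcases (show 1 + 2 - 2 * k = 0 ∨ 1 + 2 - 2 * k = 1 by omega) with h | h <;> simp [h, QQ]
      rw [hQ]
      unfold pairSum
      rw [hT1, Finset.sum_singleton]
      unfold dPair
      by_cases hke : k = 1
      · have e1 : t1 = BT.leaf := bt_size_eq_one (by omega)
        have e2 : t2 = BT.leaf := bt_size_eq_one (by omega)
        subst e1; subst e2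
        simp [fringe]
      · have e1 : t1 ≠ BT.leaf := fun h => by rw [h] at h1k; simp [BT.size] at h1k; omega
        have e2 : t2 ≠ BT.leaf := fun h => by rw [h] at h2k; simp [BT.size] at h2k; omega
        simp [fringe, Multiset.count_singleton, e1, e2]
    | (n + 2) =>
      rw [pairSum_rec t1 t2 hs n]
      have hsum : ∀ i ∈ Finset.range (n + 1),
          (((treesOfSize (n + 1 - i)).card : ℤ) * pairSum t1 t2 (i + 1)
            + ((treesOfSize (i + 1)).card : ℤ) * pairSum t1 t2 (n + 1 - i)
            + (occSum t1 (i + 1) : ℤ) * (occSum t2 (n + 1 - i) : ℤ)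
            + (occSum t2 (i + 1) : ℤ) * (occSum t1 (n + 1 - i) : ℤ))
          = (((treesOfSize (n + 1 - i)).card * QQ (i + 3 - 2 * k)
              + (treesOfSize (i + 1)).card * QQ (n + 3 - i - 2 * k)
              + treesL (i + 2 - k) * treesL (n + 2 - i - k)
              + treesL (i + 2 - k) * treesL (n + 2 - i - k) : ℕ) : ℤ) := by
        intro i hi
        have hi' := Finset.mem_range.mp hi
        rw [ih (i + 1) (by omega), ih (n + 1 - i) (by omega),
          occSum_eq t1 k h1k (i + 1), occSum_eq t2 k h2k (n + 1 - i),
          occSum_eq t2 k h2k (i + 1), occSum_eq t1 k h1k (n + 1 - i),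
          show i + 1 + 2 - 2 * k = i + 3 - 2 * k by omega,
          show n + 1 - i + 2 - 2 * k = n + 3 - i - 2 * k by omega,
          show i + 1 + 1 - k = i + 2 - k by omega,
          show n + 1 - i + 1 - k = n + 2 - i - k by omega]
        push_cast
        ring
      rw [Finset.sum_congr rfl hsum, ← Nat.cast_sum, Nat.cast_inj]
      rcases Nat.lt_or_ge (n + 2) (2 * k) with hbig | hsmall
      · -- 2k ≥ n + 3 : everything vanishes
        have hz : ∀ i ∈ Finset.range (n + 1),
            (treesOfSize (n + 1 - i)).card * QQ (i + 3 - 2 * k)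
              + (treesOfSize (i + 1)).card * QQ (n + 3 - i - 2 * k)
              + treesL (i + 2 - k) * treesL (n + 2 - i - k)
              + treesL (i + 2 - k) * treesL (n + 2 - i - k) = 0 := by
          intro i hi
          have hi' := Finset.mem_range.mp hi
          have z1 : i + 3 - 2 * k = 0 := by omega
          have z2 : n + 3 - i - 2 * k = 0 := by omega
          have z3 : i + 2 - k = 0 ∨ n + 2 - i - k = 0 := by omega
          rcases z3 with z3 | z3 <;> simp [z1, z2, z3, QQ, treesL]
        rw [Finset.sum_eq_zero hz]
        rcases (show n + 2 + 2 - 2 * k = 0 ∨ n + 2 + 2 - 2 * k = 1 by omega) with h | h <;>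
          simp [h, QQ]
      · -- 2k ≤ n + 2 : main case
        set p := n + 2 - 2 * k with hp
        rw [show n + 2 + 2 - 2 * k = p + 2 by omega]
        simp only [Finset.sum_add_distrib]
        have hSb : ∑ i ∈ Finset.range (n + 1), (treesOfSize (i + 1)).card * QQ (n + 3 - i - 2 * k)
            = ∑ i ∈ Finset.range (n + 1), (treesOfSize (n + 1 - i)).card * QQ (i + 3 - 2 * k) := by
          rw [← Finset.sum_range_reflect
            (fun j => (treesOfSize (n + 1 - j)).card * QQ (j + 3 - 2 * k)) (n + 1)]
          apply Finset.sum_congr rfl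
          intro j hj
          have hj' := Finset.mem_range.mp hj
          rw [show n + 1 - 1 - j + 3 - 2 * k = n + 3 - j - 2 * k by omega,
              show n + 1 - (n + 1 - 1 - j) = j + 1 by omega]
        rw [hSb]
        have hSa : ∑ i ∈ Finset.range (n + 1), (treesOfSize (n + 1 - i)).card * QQ (i + 3 - 2 * k)
            = ∑ j ∈ Finset.range (p + 1), (treesOfSize (p + 1 - j)).card * QQ (j + 1) := by
          rw [show n + 1 = (2 * k - 2) + (p + 1) by omega, sum_range_add']
          have h0 : ∑ i ∈ Finset.range (2 * k - 2),
              (treesOfSize (2 * k - 2 + (p + 1) - i)).card * QQ (i + 3 - 2 * k) = 0 := by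
            apply Finset.sum_eq_zero
            intro i hi
            have hi' := Finset.mem_range.mp hi
            simp [show i + 3 - 2 * k = 0 by omega, QQ]
          rw [h0, zero_add]
          apply Finset.sum_congr rfl
          intro j hj
          have hj' := Finset.mem_range.mp hj
          rw [show 2 * k - 2 + j + 3 - 2 * k = j + 1 by omega,
              show 2 * k - 2 + (p + 1) - (2 * k - 2 + j) = p + 1 - j by omega]
        rw [hSa]
        have hSc : ∑ i ∈ Finset.range (n + 1), treesL (i + 2 - k) * treesL (n + 2 - i - k)
            = ∑ j ∈ Finset.range (p + 1), treesL (j + 1) * treesL (p + 1 - j) := by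
          rw [show n + 1 = (k - 1) + (p + k) by omega, sum_range_add']
          have h0 : ∑ i ∈ Finset.range (k - 1),
              treesL (i + 2 - k) * treesL (n + 2 - i - k) = 0 := by
            apply Finset.sum_eq_zero
            intro i hi
            have hi' := Finset.mem_range.mp hi
            simp [show i + 2 - k = 0 by omega, treesL]
          rw [h0, zero_add]
          have h1 : ∀ j ∈ Finset.range (p + k),
              treesL (k - 1 + j + 2 - k) * treesL (n + 2 - (k - 1 + j) - k)
                = treesL (j + 1) * treesL (p + 1 - j) := by
            intro j hj
            have hj' := Finset.mem_range.mp hj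
            rw [show k - 1 + j + 2 - k = j + 1 by omega,
                show n + 2 - (k - 1 + j) - k = p + 1 - j by omega]
          rw [Finset.sum_congr rfl h1,
            show p + k = (p + 1) + (k - 1) by omega, sum_range_add']
          have h2 : ∑ j ∈ Finset.range (k - 1),
              treesL (p + 1 + j + 1) * treesL (p + 1 - (p + 1 + j)) = 0 := by
            apply Finset.sum_eq_zero
            intro j hj
            simp [show p + 1 - (p + 1 + j) = 0 by omega, treesL]
          rw [h2, add_zero]
        rw [hSc]
        have := QQ_two_conv p
        omega
end Aux4
section Aux5
open BT

lemma two_mul_choose_two (n : ℕ) : 2 * n.choose 2 = n * (n - 1) := by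
  rw [Nat.choose_two_right, Nat.mul_div_cancel' (Nat.even_mul_pred_self n).two_dvd]

lemma countP_mem_eq (S : Finset BT) (m : Multiset BT) :
    Multiset.countP (· ∈ S) m = ∑ s ∈ S, m.count s := by
  induction m using Multiset.induction_on with
  | empty => simp
  | cons a m ih =>
    rw [Multiset.countP_cons, ih]
    have hc : ∀ s ∈ S, Multiset.count s (a ::ₘ m)
        = Multiset.count s m + if s = a then 1 else 0 := fun s _ => Multiset.count_cons s a m
    rw [Finset.sum_congr rfl hc, Finset.sum_add_distrib,
      Finset.sum_ite_eq' S a (fun _ => 1)]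

lemma per_tree (S : Finset BT) (t : BT) :
    ((2 * Nat.choose (Multiset.countP (· ∈ S) (fringe t)) 2 : ℕ) : ℤ)
      = ∑ t1 ∈ S, ∑ t2 ∈ S, dPair t1 t2 t := by
  set N := Multiset.countP (· ∈ S) (fringe t) with hN
  have hNsum : N = ∑ s ∈ S, (fringe t).count s := countP_mem_eq S (fringe t)
  have inner : ∀ t1 ∈ S, ∑ t2 ∈ S, dPair t1 t2 t
      = ((fringe t).count t1 : ℤ) * (N : ℤ) - ((fringe t).count t1 : ℤ) := by
    intro t1 ht1
    unfold dPair
    rw [Finset.sum_sub_distrib, ← Finset.mul_sum,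
      Finset.sum_ite_eq S t1 (fun _ => ((fringe t).count t1 : ℤ)), if_pos ht1, hNsum]
    push_cast
    ring
  have e : ∑ t1 ∈ S, ∑ t2 ∈ S, dPair t1 t2 t = (N : ℤ) * N - N := by
    rw [Finset.sum_congr rfl inner, Finset.sum_sub_distrib, ← Finset.sum_mul, hNsum]
    push_cast
    ring
  rw [e, two_mul_choose_two]
  rcases Nat.eq_zero_or_pos N with h0 | h0
  · rw [h0]; simp
  · rw [Nat.cast_mul, Nat.cast_sub h0]
    push_cast
    ring

lemma QQ_closed (n k : ℕ) (hkn : 2 * k ≤ n + 1) :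
    QQ (n + 2 - 2 * k) = (n + 1 - 2 * k) * Nat.choose (2 * n + 2 - 4 * k) (n + 1 - 2 * k) := by
  set j := n + 1 - 2 * k with hj
  rw [show n + 2 - 2 * k = j + 1 by omega]
  unfold QQ
  rw [Nat.add_sub_cancel, card_trees_catalan j, show 2 * n + 2 - 4 * k = 2 * j by omega]
  rw [show (j + 1) * j * catalan j = j * ((j + 1) * catalan j) by ring,
    succ_mul_catalan_eq_centralBinom, Nat.centralBinom_eq_two_mul_choose]
end Aux5


open BT in
/-- For positive integers `n, k` with `2k ≤ n + 1` and any `S_k ⊆ T_k` with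
`|S_k| = s_k`, writing `N_k(t) = #{v ∈ t : t(v) ∈ S_k}`, we have
`Σ_{t ∈ T_n} binom(N_k(t), 2) = ((n−2k+1)/2)·binom(2n−4k+2, n−2k+1)·s_k²`
(stated with both sides multiplied by `2` to avoid division in `ℕ`). -/
theorem total_pairs_of_fringe_occurrences_uniform
    (n k : ℕ) (hn : 0 < n) (hk : 0 < k) (hkn : 2 * k ≤ n + 1)
    (S : Finset BT) (hS : S ⊆ treesOfSize k) :
    2 * ∑ t ∈ treesOfSize n, Nat.choose (Multiset.countP (· ∈ S) (fringe t)) 2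
      = (n + 1 - 2 * k) * Nat.choose (2 * n + 2 - 4 * k) (n + 1 - 2 * k) * S.card ^ 2 := by
  have hsizes : ∀ s ∈ S, BT.size s = k := fun s hs => size_of_mem_treesOfSize k s (hS hs)
  have main : ((2 * ∑ t ∈ treesOfSize n, Nat.choose (Multiset.countP (· ∈ S) (fringe t)) 2 : ℕ) : ℤ)
      = (((n + 1 - 2 * k) * Nat.choose (2 * n + 2 - 4 * k) (n + 1 - 2 * k) * S.card ^ 2 : ℕ) : ℤ) := by
    calc ((2 * ∑ t ∈ treesOfSize n, Nat.choose (Multiset.countP (· ∈ S) (fringe t)) 2 : ℕ) : ℤ)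
        = ∑ t ∈ treesOfSize n,
            ((2 * Nat.choose (Multiset.countP (· ∈ S) (fringe t)) 2 : ℕ) : ℤ) := by
          push_cast
          rw [Finset.mul_sum]
      _ = ∑ t ∈ treesOfSize n, ∑ t1 ∈ S, ∑ t2 ∈ S, dPair t1 t2 t :=
          Finset.sum_congr rfl fun t _ => per_tree S t
      _ = ∑ t1 ∈ S, ∑ t2 ∈ S, pairSum t1 t2 n := by
          rw [Finset.sum_comm]
          apply Finset.sum_congr rfl
          intro t1 _
          rw [Finset.sum_comm]
          rfl
      _ = ∑ t1 ∈ S, ∑ t2 ∈ S, (QQ (n + 2 - 2 * k) : ℤ) := by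
          apply Finset.sum_congr rfl
          intro t1 h1
          apply Finset.sum_congr rfl
          intro t2 h2
          exact pairSum_eq t1 t2 k (hsizes t1 h1) (hsizes t2 h2) n
      _ = (S.card : ℤ) ^ 2 * (QQ (n + 2 - 2 * k) : ℤ) := by
          simp [Finset.sum_const]
          ring
      _ = (((n + 1 - 2 * k) * Nat.choose (2 * n + 2 - 4 * k) (n + 1 - 2 * k) * S.card ^ 2 : ℕ) : ℤ) := by
          rw [QQ_closed n k hkn]
          push_cast
          ring
  exact_mod_cast main
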